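/- Let p be a polynomial of degree at most L with complex coefficients such that |p(x)| ≤ 1 for all real x ∈ [−1, 1]. Then |p(z)| ≤ (1 + √2)^L for every complex number z with |z| = 1. -/

import Mathlib

open Polynomial Finset

noncomputable def qAux (L : ℕ) (p : Polynomial ℂ) : Polynomial ℂ :=
  ∑ k ∈ Finset.range (L + 1),
    Polynomial.C (p.coeff k / 2 ^ k) * (Polynomial.X ^ 2 + 1) ^ k * Polynomial.X ^ (L - k)

lemma qAux_eval (L : ℕ) (p : Polynomial ℂ) (hdeg : p.natDegree ≤ L) (y : ℂ) (hy : y ≠ 0) :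
    (qAux L p).eval y = y ^ L * p.eval ((y + y⁻¹) / 2) := by
  have hp : p.eval ((y + y⁻¹) / 2) =
      ∑ k ∈ Finset.range (L + 1), p.coeff k * ((y + y⁻¹) / 2) ^ k :=
    Polynomial.eval_eq_sum_range' (Nat.lt_succ_of_le hdeg) _
  rw [hp, Finset.mul_sum]
  unfold qAux
  rw [Polynomial.eval_finset_sum]
  apply Finset.sum_congr rfl
  intro k hk
  have hk' : k ≤ L := Nat.lt_succ_iff.mp (Finset.mem_range.mp hk)
  obtain ⟨j, hj⟩ : ∃ j, L = k + j := ⟨L - k, (Nat.add_sub_cancel' hk').symm⟩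
  subst hj
  simp only [Polynomial.eval_mul, Polynomial.eval_C, Polynomial.eval_pow,
    Polynomial.eval_add, Polynomial.eval_X, Polynomial.eval_one, Nat.add_sub_cancel_left,
    pow_add]
  field_simp
  rw [div_pow, mul_pow]
  field_simp

lemma qAux_bound (L : ℕ) (p : Polynomial ℂ) (hdeg : p.natDegree ≤ L)
    (hb : ∀ x : ℝ, x ∈ Set.Icc (-1 : ℝ) 1 → ‖p.eval (x : ℂ)‖ ≤ 1)
    (y : ℂ) (hy : ‖y‖ ≤ 1) : ‖(qAux L p).eval y‖ ≤ 1 := by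
  have key : ∀ w ∈ frontier (Metric.ball (0 : ℂ) 1),
      ‖(qAux L p).eval w‖ ≤ 1 := by
    intro w hw
    rw [frontier_ball (0 : ℂ) one_ne_zero, Metric.mem_sphere, dist_zero_right] at hw
    have hw0 : w ≠ 0 := by
      intro h; rw [h] at hw; simp at hw
    have hinv : w⁻¹ = starRingEnd ℂ w := by
      rw [Complex.inv_def, Complex.normSq_eq_norm_sq]
      simp [hw]
    have hre : (w + w⁻¹) / 2 = ((w.re : ℝ) : ℂ) := by
      rw [hinv, Complex.add_conj]
      push_cast
      ring
    rw [qAux_eval L p hdeg w hw0, norm_mul, norm_pow, hre]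
    have h1 : ‖w‖ = 1 := by exact hw
    rw [h1, one_pow, one_mul]
    apply hb
    constructor
    · have := Complex.abs_re_le_norm w
      rw [h1] at this
      linarith [abs_le.mp (by rwa [← Real.norm_eq_abs] at this)]
    · have := Complex.abs_re_le_norm w
      rw [h1] at this
      linarith [abs_le.mp (by rwa [← Real.norm_eq_abs] at this)]
  have hmax := Complex.norm_le_of_forall_mem_frontier_norm_le
    (Metric.isBounded_ball (x := (0 : ℂ)) (r := 1))
    ((( qAux L p).differentiable).diffContOnCl) key (z := y) ?_
  · exact hmax
  · rw [closure_ball (0 : ℂ) one_ne_zero, Metric.mem_closedBall, dist_zero_right]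
    exact hy

lemma key_step (L : ℕ) (p : Polynomial ℂ) (hdeg : p.natDegree ≤ L)
    (hb : ∀ x : ℝ, x ∈ Set.Icc (-1 : ℝ) 1 → ‖p.eval (x : ℂ)‖ ≤ 1)
    (z y : ℂ) (hy0 : y ≠ 0) (hy1 : ‖y‖ ≤ 1)
    (hylb : (1 + Real.sqrt 2)⁻¹ ≤ ‖y‖)
    (hyz : (y + y⁻¹) / 2 = z) :
    ‖p.eval z‖ ≤ (1 + Real.sqrt 2) ^ L := by
  have hq : ‖(qAux L p).eval y‖ ≤ 1 := qAux_bound L p hdeg hb y hy1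
  rw [qAux_eval L p hdeg y hy0, hyz, norm_mul, norm_pow] at hq
  have hs2 : (0 : ℝ) < 1 + Real.sqrt 2 := by positivity
  have hylb' : ((1 + Real.sqrt 2)⁻¹) ^ L ≤ ‖y‖ ^ L :=
    pow_le_pow_left₀ (by positivity) hylb L
  have hb0 : (0 : ℝ) ≤ ‖p.eval z‖ := norm_nonneg _
  have h1 : ‖p.eval z‖ * ((1 + Real.sqrt 2)⁻¹) ^ L ≤ 1 := by
    calc ‖p.eval z‖ * ((1 + Real.sqrt 2)⁻¹) ^ L
        ≤ ‖p.eval z‖ * ‖y‖ ^ L := by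
          exact mul_le_mul_of_nonneg_left hylb' hb0
      _ = ‖y‖ ^ L * ‖p.eval z‖ := by ring
      _ ≤ 1 := hq
  have hpos : (0 : ℝ) < ((1 + Real.sqrt 2)⁻¹) ^ L := by positivity
  have := (le_div_iff₀ hpos).mpr (by linarith [h1] : ‖p.eval z‖ * ((1 + Real.sqrt 2)⁻¹) ^ L ≤ 1)
  calc ‖p.eval z‖ ≤ 1 / ((1 + Real.sqrt 2)⁻¹) ^ L := this
    _ = (1 + Real.sqrt 2) ^ L := by
        rw [one_div, ← inv_pow, inv_inv]

theorem stmt_11 (L : ℕ) (p : Polynomial ℂ) (hdeg : p.natDegree ≤ L)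
    (hb : ∀ x : ℝ, x ∈ Set.Icc (-1 : ℝ) 1 → ‖p.eval (x : ℂ)‖ ≤ 1) :
    ∀ z : ℂ, ‖z‖ = 1 → ‖p.eval z‖ ≤ (1 + Real.sqrt 2) ^ L := by
  intro z hz
  obtain ⟨w, hw⟩ : ∃ w : ℂ, w ^ 2 = z ^ 2 - 1 :=
    IsAlgClosed.exists_pow_nat_eq (z ^ 2 - 1) two_pos
  set y₁ := z + w with hy₁
  set y₂ := z - w with hy₂
  have hprod : y₁ * y₂ = 1 := by
    rw [hy₁, hy₂]; linear_combination -hw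
  have h10 : y₁ ≠ 0 := left_ne_zero_of_mul_eq_one hprod
  have h20 : y₂ ≠ 0 := right_ne_zero_of_mul_eq_one hprod
  have habs : ‖y₁‖ * ‖y₂‖ = 1 := by
    rw [← norm_mul, hprod, norm_one]
  have hw2 : ‖w‖ ≤ Real.sqrt 2 := by
    have h1 : ‖w‖ ^ 2 = ‖z ^ 2 - 1‖ := by
      rw [← norm_pow, hw]
    have h2 : ‖z ^ 2 - 1‖ ≤ 2 := by
      calc ‖z ^ 2 - 1‖ ≤ ‖z ^ 2‖ + ‖(1:ℂ)‖ := by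
            exact norm_sub_le _ _
        _ = 2 := by rw [norm_pow, hz, norm_one]; norm_num
    nlinarith [norm_nonneg w, Real.sqrt_nonneg 2,
      Real.sq_sqrt (by norm_num : (0:ℝ) ≤ 2), h1.le, h2]
  have hub : ∀ i ∈ ({y₁, y₂} : Set ℂ), ‖i‖ ≤ 1 + Real.sqrt 2 := by
    rintro i (rfl | rfl)
    · calc ‖z + w‖ ≤ ‖z‖ + ‖w‖ := norm_add_le _ _
        _ ≤ 1 + Real.sqrt 2 := by rw [hz]; linarith
    · calc ‖z - w‖ ≤ ‖z‖ + ‖w‖ := norm_sub_le _ _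
        _ ≤ 1 + Real.sqrt 2 := by rw [hz]; linarith
  have hub1 : ‖y₁‖ ≤ 1 + Real.sqrt 2 := hub y₁ (by left; rfl)
  have hub2 : ‖y₂‖ ≤ 1 + Real.sqrt 2 := hub y₂ (by right; rfl)
  have hs2 : (0 : ℝ) < 1 + Real.sqrt 2 := by positivity
  have ha1 : 0 < ‖y₁‖ := norm_pos_iff.mpr h10
  have ha2 : 0 < ‖y₂‖ := norm_pos_iff.mpr h20
  have hlb1 : (1 + Real.sqrt 2)⁻¹ ≤ ‖y₁‖ := by
    rw [inv_le_iff_one_le_mul₀ hs2]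
    calc (1:ℝ) = ‖y₁‖ * ‖y₂‖ := habs.symm
      _ ≤ ‖y₁‖ * (1 + Real.sqrt 2) := by
          exact mul_le_mul_of_nonneg_left hub2 ha1.le
  have hlb2 : (1 + Real.sqrt 2)⁻¹ ≤ ‖y₂‖ := by
    rw [inv_le_iff_one_le_mul₀ hs2]
    calc (1:ℝ) = ‖y₁‖ * ‖y₂‖ := habs.symm
      _ ≤ (1 + Real.sqrt 2) * ‖y₂‖ := by
          exact mul_le_mul_of_nonneg_right hub1 ha2.le
      _ = ‖y₂‖ * (1 + Real.sqrt 2) := mul_comm _ _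
  have hinv1 : y₁⁻¹ = y₂ := inv_eq_of_mul_eq_one_right hprod
  have hinv2 : y₂⁻¹ = y₁ := inv_eq_of_mul_eq_one_left hprod
  by_cases hc : ‖y₁‖ ≤ 1
  · exact key_step L p hdeg hb z y₁ h10 hc hlb1 (by rw [hinv1, hy₁, hy₂]; ring)
  · have hc2 : ‖y₂‖ ≤ 1 := by
      by_contra hc2
      push_neg at hc hc2
      nlinarith
    exact key_step L p hdeg hb z y₂ h20 hc2 hlb2 (by rw [hinv2, hy₁, hy₂]; ring)
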